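/- arXiv:1602.03448 — 7 statements merged into one kernel-verified Lean document; each statement's English description precedes it below -/
import Mathlib

section
/- Let a, b, c, d be integers with |a·d − b·c| = 2, and let (m1, p1), (m2, p2) ∈ ℤ² with m1 ≡ m2 (mod 2) and p1 ≡ p2 (mod 2). Then the lines ℓ1 = {(m1, p1) + t·(a, b) : t ∈ ℝ} and ℓ2 = {(m2, p2) + t·(c, d) : t ∈ ℝ} in ℝ² intersect in exactly one point, this point lies in ℤ², and in fact there exist integers s and t with (m1, p1) + s·(a, b) = (m2, p2) + t·(c, d). -/
/-- If `a,b,c,d` are integers with `|a*d - b*c| = 2` and the integer base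
points are congruent coordinatewise modulo 2, then the two lines intersect in exactly one
point, that point is an integer point, and the intersection is realized by integer
parameter values. -/
theorem stmt_2 (a b c d m1 p1 m2 p2 : ℤ) (h : |a * d - b * c| = 2)
    (hm : m1 ≡ m2 [ZMOD 2]) (hp : p1 ≡ p2 [ZMOD 2]) :
    (∃! p : ℝ × ℝ,
        (∃ t : ℝ, p = ((m1 : ℝ) + t * a, (p1 : ℝ) + t * b)) ∧
        (∃ t : ℝ, p = ((m2 : ℝ) + t * c, (p2 : ℝ) + t * d))) ∧
    (∀ p : ℝ × ℝ,
        ((∃ t : ℝ, p = ((m1 : ℝ) + t * a, (p1 : ℝ) + t * b)) ∧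
         (∃ t : ℝ, p = ((m2 : ℝ) + t * c, (p2 : ℝ) + t * d))) →
        ∃ x y : ℤ, p = ((x : ℝ), (y : ℝ))) ∧
    (∃ s t : ℤ, ((m1 + s * a, p1 + s * b) : ℤ × ℤ) = (m2 + t * c, p2 + t * d)) := by
  have h2 : a * d - b * c = 2 ∨ a * d - b * c = -2 :=
    (abs_eq (by norm_num : (0:ℤ) ≤ 2)).mp h
  obtain ⟨u, hu⟩ : (2:ℤ) ∣ m2 - m1 := Int.ModEq.dvd hm
  obtain ⟨v, hv⟩ : (2:ℤ) ∣ p2 - p1 := Int.ModEq.dvd hp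
  obtain ⟨s, t, hs1, hs2⟩ :
      ∃ s t : ℤ, m1 + s * a = m2 + t * c ∧ p1 + s * b = p2 + t * d := by
    rcases h2 with hD | hD
    · exact ⟨u * d - v * c, u * b - v * a,
        by linear_combination u * hD - hu, by linear_combination v * hD - hv⟩
    · exact ⟨v * c - u * d, v * a - u * b,
        by linear_combination -u * hD - hu, by linear_combination -v * hD - hv⟩
  have hDne : (a : ℝ) * d - (b : ℝ) * c ≠ 0 := by
    have hz : a * d - b * c ≠ 0 := by rcases h2 with hD | hD <;> omega
    have : ((a * d - b * c : ℤ) : ℝ) ≠ 0 := Int.cast_ne_zero.mpr hz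
    push_cast at this; exact this
  have hsr1 : (m1 : ℝ) + (s : ℝ) * a = (m2 : ℝ) + (t : ℝ) * c := by
    exact_mod_cast congrArg (Int.cast : ℤ → ℝ) hs1
  have hsr2 : (p1 : ℝ) + (s : ℝ) * b = (p2 : ℝ) + (t : ℝ) * d := by
    exact_mod_cast congrArg (Int.cast : ℤ → ℝ) hs2
  set P : ℝ × ℝ := ((m1 : ℝ) + (s : ℝ) * a, (p1 : ℝ) + (s : ℝ) * b) with hP
  have hPline : (∃ t : ℝ, P = ((m1 : ℝ) + t * a, (p1 : ℝ) + t * b)) ∧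
      (∃ t : ℝ, P = ((m2 : ℝ) + t * c, (p2 : ℝ) + t * d)) :=
    ⟨⟨(s : ℝ), rfl⟩, ⟨(t : ℝ), by rw [hP, hsr1, hsr2]⟩⟩
  have key : ∀ p : ℝ × ℝ,
      ((∃ t : ℝ, p = ((m1 : ℝ) + t * a, (p1 : ℝ) + t * b)) ∧
       (∃ t : ℝ, p = ((m2 : ℝ) + t * c, (p2 : ℝ) + t * d))) → p = P := by
    rintro p ⟨⟨x, hx⟩, ⟨y, hy⟩⟩
    have hxy := hx.symm.trans hy
    rw [Prod.ext_iff] at hxy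
    obtain ⟨e1, e2⟩ := hxy
    simp only at e1 e2
    have hx_s : (x - (s : ℝ)) * ((a : ℝ) * d - (b : ℝ) * c) = 0 := by
      linear_combination (d : ℝ) * e1 - (d : ℝ) * hsr1 - (c : ℝ) * e2 + (c : ℝ) * hsr2
    have hxs : x = (s : ℝ) := by
      rcases mul_eq_zero.mp hx_s with h0 | h0
      · linarith [sub_eq_zero.mp h0]
      · exact absurd h0 hDne
    rw [hx, hxs]
  refine ⟨⟨P, hPline, key⟩, ?_, ⟨s, t, by rw [hs1, hs2]⟩⟩
  intro p hp
  rw [key p hp]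
  exact ⟨m1 + s * a, p1 + s * b, by push_cast; rfl⟩
end

section
/- Let a, b, c, d be integers with gcd(a, b) = 1, gcd(c, d) = 1 and a·d − b·c ≠ 0. Then the number of points of ℤ² of the form s·(a, b) + t·(c, d) with 0 < s < 1 and 0 < t < 1 (s, t real) equals |a·d − b·c| − 1. -/
private lemma count_pos (a b c d D : ℤ) (hab : Int.gcd a b = 1) (hcd : Int.gcd c d = 1)
    (hDdef : a * d - b * c = D) (hD : 0 < D) :
    {p : ℤ × ℤ | ∃ s t : ℝ, 0 < s ∧ s < 1 ∧ 0 < t ∧ t < 1 ∧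
        (p.1 : ℝ) = s * a + t * c ∧ (p.2 : ℝ) = s * b + t * d}.ncard
      = D.natAbs - 1 := by
  subst hDdef
  have hDne : a * d - b * c ≠ 0 := hD.ne'
  have hD0 : (0 : ℝ) < ((a * d - b * c : ℤ) : ℝ) := by exact_mod_cast hD
  -- Step 1: rewrite the set with integer conditions
  have hset : {p : ℤ × ℤ | ∃ s t : ℝ, 0 < s ∧ s < 1 ∧ 0 < t ∧ t < 1 ∧
        (p.1 : ℝ) = s * a + t * c ∧ (p.2 : ℝ) = s * b + t * d}
      = {p : ℤ × ℤ | 0 < d * p.1 - c * p.2 ∧ d * p.1 - c * p.2 < a * d - b * c ∧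
          0 < a * p.2 - b * p.1 ∧ a * p.2 - b * p.1 < a * d - b * c} := by
    ext ⟨x, y⟩
    simp only [Set.mem_setOf_eq]
    constructor
    · rintro ⟨s, t, hs0, hs1, ht0, ht1, hx, hy⟩
      have hu : ((d * x - c * y : ℤ) : ℝ) = s * ((a * d - b * c : ℤ) : ℝ) := by
        push_cast
        linear_combination (d : ℝ) * hx - (c : ℝ) * hy
      have hv : ((a * y - b * x : ℤ) : ℝ) = t * ((a * d - b * c : ℤ) : ℝ) := by
        push_cast
        linear_combination (a : ℝ) * hy - (b : ℝ) * hx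
      have h1 : (0 : ℝ) < ((d * x - c * y : ℤ) : ℝ) := by rw [hu]; positivity
      have h2 : ((d * x - c * y : ℤ) : ℝ) < ((a * d - b * c : ℤ) : ℝ) := by
        rw [hu]; nlinarith
      have h3 : (0 : ℝ) < ((a * y - b * x : ℤ) : ℝ) := by rw [hv]; positivity
      have h4 : ((a * y - b * x : ℤ) : ℝ) < ((a * d - b * c : ℤ) : ℝ) := by
        rw [hv]; nlinarith
      exact ⟨by exact_mod_cast h1, by exact_mod_cast h2, by exact_mod_cast h3, by exact_mod_cast h4⟩
    · rintro ⟨h1, h2, h3, h4⟩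
      have hDr : ((a * d - b * c : ℤ) : ℝ) ≠ 0 := ne_of_gt hD0
      refine ⟨((d * x - c * y : ℤ) : ℝ) / ((a * d - b * c : ℤ) : ℝ),
              ((a * y - b * x : ℤ) : ℝ) / ((a * d - b * c : ℤ) : ℝ), ?_, ?_, ?_, ?_, ?_, ?_⟩
      · apply div_pos _ hD0; exact_mod_cast h1
      · rw [div_lt_one hD0]; exact_mod_cast h2
      · apply div_pos _ hD0; exact_mod_cast h3
      · rw [div_lt_one hD0]; exact_mod_cast h4
      · rw [div_mul_eq_mul_div, div_mul_eq_mul_div, ← add_div, eq_div_iff hDr]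
        push_cast
        ring
      · rw [div_mul_eq_mul_div, div_mul_eq_mul_div, ← add_div, eq_div_iff hDr]
        push_cast
        ring
  rw [hset]
  -- Step 2: bijection with Ioo 0 D via p ↦ d * p.1 - c * p.2
  set T : Set (ℤ × ℤ) := {p : ℤ × ℤ | 0 < d * p.1 - c * p.2 ∧ d * p.1 - c * p.2 < a * d - b * c ∧
          0 < a * p.2 - b * p.1 ∧ a * p.2 - b * p.1 < a * d - b * c} with hT
  obtain ⟨P, Q, hPQ⟩ := Int.isCoprime_iff_gcd_eq_one.mpr hcd
  obtain ⟨R, S, hRS⟩ := Int.isCoprime_iff_gcd_eq_one.mpr hab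
  have hbij : Set.BijOn (fun p : ℤ × ℤ => d * p.1 - c * p.2) T (Set.Ioo 0 (a * d - b * c)) := by
    refine ⟨fun p hp => ⟨hp.1, hp.2.1⟩, ?_, ?_⟩
    · rintro ⟨x1, y1⟩ h1 ⟨x2, y2⟩ h2 hfe
      simp only [hT, Set.mem_setOf_eq] at h1 h2
      simp only at hfe
      have hc : c * ((a * y1 - b * x1) - (a * y2 - b * x2)) = (a * d - b * c) * (x1 - x2) := by
        linear_combination (-a) * hfe
      have hd : d * ((a * y1 - b * x1) - (a * y2 - b * x2)) = (a * d - b * c) * (y1 - y2) := by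
        linear_combination (-b) * hfe
      have hdvd : (a * d - b * c) ∣ ((a * y1 - b * x1) - (a * y2 - b * x2)) := by
        have heq : (a * y1 - b * x1) - (a * y2 - b * x2)
            = P * ((a * d - b * c) * (x1 - x2)) + Q * ((a * d - b * c) * (y1 - y2)) := by
          linear_combination (-((a * y1 - b * x1) - (a * y2 - b * x2))) * hPQ + P * hc + Q * hd
        rw [heq]
        exact dvd_add ((dvd_mul_right _ _).mul_left P) ((dvd_mul_right _ _).mul_left Q)
      have hveq : (a * y1 - b * x1) = (a * y2 - b * x2) := by
        have habs : |(a * y1 - b * x1) - (a * y2 - b * x2)| < a * d - b * c := by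
          rw [abs_lt]; constructor <;> omega
        have := Int.eq_zero_of_abs_lt_dvd hdvd habs
        omega
      have hx : (a * d - b * c) * x1 = (a * d - b * c) * x2 := by
        linear_combination a * hfe + c * hveq
      have hy : (a * d - b * c) * y1 = (a * d - b * c) * y2 := by
        linear_combination b * hfe + d * hveq
      have ex : x1 = x2 := mul_left_cancel₀ hDne hx
      have ey : y1 = y2 := mul_left_cancel₀ hDne hy
      simp [ex, ey]
    · rintro u ⟨hu0, huD⟩
      set w : ℤ := -(P * a + Q * b) * u with hw
      set v : ℤ := w % (a * d - b * c) with hv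
      have hv0 : 0 ≤ v := Int.emod_nonneg w hDne
      have hvD : v < a * d - b * c := Int.emod_lt_of_pos w hD
      have hwv : (a * d - b * c) ∣ w - v := Int.dvd_self_sub_of_emod_eq rfl
      have hcw : a * u + c * w = Q * (a * d - b * c) * u := by
        rw [hw]; linear_combination (-(a * u)) * hPQ
      have hdw : b * u + d * w = -(P * (a * d - b * c) * u) := by
        rw [hw]; linear_combination (-(b * u)) * hPQ
      have hda : (a * d - b * c) ∣ a * u + c * v := by
        have heq : a * u + c * v = Q * (a * d - b * c) * u - c * (w - v) := by
          linear_combination hcw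
        rw [heq]
        exact dvd_sub ⟨Q * u, by ring⟩ (hwv.mul_left c)
      have hdb : (a * d - b * c) ∣ b * u + d * v := by
        have heq : b * u + d * v = -(P * (a * d - b * c) * u) - d * (w - v) := by
          linear_combination hdw
        rw [heq]
        exact dvd_sub ⟨-(P * u), by ring⟩ (hwv.mul_left d)
      have hvne : v ≠ 0 := by
        intro h0
        rw [h0, mul_zero, add_zero] at hda hdb
        have h3 : (a * d - b * c) ∣ u := by
          have heq : u = R * (a * u) + S * (b * u) := by linear_combination u * hRS.symm
          rw [heq]
          exact dvd_add (hda.mul_left R) (hdb.mul_left S)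
        have := Int.le_of_dvd hu0 h3
        omega
      have hx : (a * d - b * c) * ((a * u + c * v) / (a * d - b * c)) = a * u + c * v :=
        Int.mul_ediv_cancel' hda
      have hy : (a * d - b * c) * ((b * u + d * v) / (a * d - b * c)) = b * u + d * v :=
        Int.mul_ediv_cancel' hdb
      have hfu : d * ((a * u + c * v) / (a * d - b * c)) - c * ((b * u + d * v) / (a * d - b * c)) = u := by
        have key : (a * d - b * c) * (d * ((a * u + c * v) / (a * d - b * c))
            - c * ((b * u + d * v) / (a * d - b * c))) = (a * d - b * c) * u := by
          linear_combination d * hx - c * hy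
        exact mul_left_cancel₀ hDne key
      have hfv : a * ((b * u + d * v) / (a * d - b * c)) - b * ((a * u + c * v) / (a * d - b * c)) = v := by
        have key : (a * d - b * c) * (a * ((b * u + d * v) / (a * d - b * c))
            - b * ((a * u + c * v) / (a * d - b * c))) = (a * d - b * c) * v := by
          linear_combination a * hy - b * hx
        exact mul_left_cancel₀ hDne key
      refine ⟨((a * u + c * v) / (a * d - b * c), (b * u + d * v) / (a * d - b * c)), ?_, ?_⟩
      · simp only [hT, Set.mem_setOf_eq]
        rw [hfu, hfv]
        exact ⟨hu0, huD, by omega, hvD⟩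
      · simpa using hfu
  calc T.ncard = ((fun p : ℤ × ℤ => d * p.1 - c * p.2) '' T).ncard :=
        (Set.ncard_image_of_injOn hbij.injOn).symm
    _ = (Set.Ioo (0 : ℤ) (a * d - b * c)).ncard := by rw [hbij.image_eq]
    _ = (a * d - b * c).natAbs - 1 := by
        rw [← Finset.coe_Ioo, Set.ncard_coe_finset, Int.card_Ioo]
        omega

/-- For coprime integer vectors `(a,b)` and `(c,d)` with `a*d - b*c ≠ 0`,
the number of integer points in the open parallelogram
`{s•(a,b) + t•(c,d) : 0 < s < 1, 0 < t < 1}` is `|a*d - b*c| - 1`. -/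
theorem stmt_3 (a b c d : ℤ) (hab : Int.gcd a b = 1) (hcd : Int.gcd c d = 1)
    (h : a * d - b * c ≠ 0) :
    {p : ℤ × ℤ | ∃ s t : ℝ, 0 < s ∧ s < 1 ∧ 0 < t ∧ t < 1 ∧
        (p.1 : ℝ) = s * a + t * c ∧ (p.2 : ℝ) = s * b + t * d}.ncard
      = (a * d - b * c).natAbs - 1 := by
  rcases lt_or_gt_of_ne h with hneg | hpos
  · have hpos' : 0 < c * b - d * a := by linarith
    have hswap : {p : ℤ × ℤ | ∃ s t : ℝ, 0 < s ∧ s < 1 ∧ 0 < t ∧ t < 1 ∧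
          (p.1 : ℝ) = s * a + t * c ∧ (p.2 : ℝ) = s * b + t * d}
        = {p : ℤ × ℤ | ∃ s t : ℝ, 0 < s ∧ s < 1 ∧ 0 < t ∧ t < 1 ∧
          (p.1 : ℝ) = s * c + t * a ∧ (p.2 : ℝ) = s * d + t * b} := by
      ext p
      constructor
      · rintro ⟨s, t, h1, h2, h3, h4, h5, h6⟩
        exact ⟨t, s, h3, h4, h1, h2, by linarith, by linarith⟩
      · rintro ⟨s, t, h1, h2, h3, h4, h5, h6⟩
        exact ⟨t, s, h3, h4, h1, h2, by linarith, by linarith⟩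
    rw [hswap, count_pos c d a b (c * b - d * a) hcd hab rfl hpos']
    congr 1
    rw [show c * b - d * a = -(a * d - b * c) by ring, Int.natAbs_neg]
  · exact count_pos a b c d (a * d - b * c) hab hcd rfl hpos
end

section
/- Let a, b, c, d be integers with gcd(a, b) = 1, gcd(c, d) = 1 and a·d − b·c ≠ 0. Then the number of points of ℤ² of the form s·(2a, 2b) + t·(2c, 2d) with 0 < s < 1 and 0 < t < 1 (s, t real) equals 4·|a·d − b·c| − 3. -/
private lemma fiber_iff (D e k j : ℤ) (hD : 0 < D) (hco : IsCoprime e D)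
    (hk1 : 0 < k) (hk2 : k < 2 * D) :
    (0 < j * D + k * e ∧ j * D + k * e < 2 * D) ↔
      (j = (-(k * e)) / D + 1 ∨ (j = (-(k * e)) / D + 2 ∧ k ≠ D)) := by
  have hDne : D ≠ 0 := hD.ne'
  set q := (-(k * e)) / D with hqdef
  set m := (-(k * e)) % D with hmdef
  have hm0 : 0 ≤ m := Int.emod_nonneg _ hDne
  have hm1 : m < D := Int.emod_lt_of_pos _ hD
  have hqm : D * q + m = -(k * e) := Int.mul_ediv_add_emod _ _
  have hdvd : m = 0 ↔ k = D := by
    constructor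
    · intro h0
      have h1 : D ∣ -(k * e) := Int.dvd_of_emod_eq_zero h0
      have h2 : D ∣ k * e := (dvd_neg).mp h1
      obtain ⟨t, rfl⟩ := hco.symm.dvd_of_dvd_mul_right h2
      have ht1 : 0 < t := by
        have : D * 0 < D * t := by linarith
        exact lt_of_mul_lt_mul_left this hD.le
      have ht2 : t < 2 := by
        have : D * t < D * 2 := by linarith
        exact lt_of_mul_lt_mul_left this hD.le
      have : t = 1 := by omega
      rw [this, mul_one]
    · intro h0
      rw [hmdef, h0]
      exact Int.emod_eq_zero_of_dvd ⟨-e, by ring⟩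
  have key : j * D + k * e = (j - q) * D - m := by linear_combination hqm
  constructor
  · rintro ⟨h1, h2⟩
    rw [key] at h1 h2
    have hipos : 0 < j - q := by
      by_contra hn
      push_neg at hn
      have : (j - q) * D ≤ 0 := mul_nonpos_iff.mpr (Or.inr ⟨hn, hD.le⟩)
      linarith
    have hilt : j - q < 3 := by
      have h3 : (j - q) * D < 3 * D := by linarith
      exact lt_of_mul_lt_mul_right h3 hD.le
    have : j - q = 1 ∨ j - q = 2 := by omega
    rcases this with hi | hi
    · left; omega
    · right
      refine ⟨by omega, fun hkD => ?_⟩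
      have hm0' : m = 0 := hdvd.mpr hkD
      rw [hi] at h2
      omega
  · rintro (rfl | ⟨rfl, hne⟩)
    · have hv : (q + 1) * D + k * e = D - m := by linear_combination hqm
      rw [hv]; constructor <;> linarith
    · have hv : (q + 2) * D + k * e = 2 * D - m := by linear_combination hqm
      have hmne : m ≠ 0 := fun h0 => hne (hdvd.mp h0)
      rw [hv]; constructor <;> omega

private lemma stmt_aux (a b c d : ℤ) (hab : Int.gcd a b = 1) (hcd : Int.gcd c d = 1)
    (hD : 0 < a * d - b * c) :
    {p : ℤ × ℤ | ∃ s t : ℝ, 0 < s ∧ s < 1 ∧ 0 < t ∧ t < 1 ∧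
        (p.1 : ℝ) = s * (2 * a) + t * (2 * c) ∧ (p.2 : ℝ) = s * (2 * b) + t * (2 * d)}.ncard
      = 4 * (a * d - b * c).natAbs - 3 := by
  obtain ⟨x, y, hx⟩ := Int.isCoprime_iff_gcd_eq_one.mpr hab
  obtain ⟨u', v', hu⟩ := Int.isCoprime_iff_gcd_eq_one.mpr hcd
  set D : ℤ := a * d - b * c with hDdef
  set e : ℤ := -(c * x + d * y) with hedef
  have hco : IsCoprime e D := by
    refine ⟨-(a * u' + b * v'), -(y * u' - x * v'), ?_⟩
    rw [hedef, hDdef]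
    linear_combination (c * u' + d * v') * hx + hu
  have hDR : (0 : ℝ) < (a : ℝ) * d - b * c := by exact_mod_cast hD
  -- Step B: reduce to integer inequalities
  have hSB : {p : ℤ × ℤ | ∃ s t : ℝ, 0 < s ∧ s < 1 ∧ 0 < t ∧ t < 1 ∧
        (p.1 : ℝ) = s * (2 * a) + t * (2 * c) ∧ (p.2 : ℝ) = s * (2 * b) + t * (2 * d)}
      = {p : ℤ × ℤ | 0 < d * p.1 - c * p.2 ∧ d * p.1 - c * p.2 < 2 * D ∧
          0 < a * p.2 - b * p.1 ∧ a * p.2 - b * p.1 < 2 * D} := by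
    ext p
    simp only [Set.mem_setOf_eq]
    constructor
    · rintro ⟨s, t, hs0, hs1, ht0, ht1, h1, h2⟩
      have hu' : (d : ℝ) * p.1 - c * p.2 = s * (2 * ((a : ℝ) * d - b * c)) := by
        rw [h1, h2]; ring
      have hv' : (a : ℝ) * p.2 - b * p.1 = t * (2 * ((a : ℝ) * d - b * c)) := by
        rw [h1, h2]; ring
      have b1 : (0 : ℝ) < (d : ℝ) * p.1 - c * p.2 := by
        rw [hu']; positivity
      have b2 : (d : ℝ) * p.1 - c * p.2 < 2 * ((a : ℝ) * d - b * c) := by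
        rw [hu']; nlinarith
      have b3 : (0 : ℝ) < (a : ℝ) * p.2 - b * p.1 := by
        rw [hv']; positivity
      have b4 : (a : ℝ) * p.2 - b * p.1 < 2 * ((a : ℝ) * d - b * c) := by
        rw [hv']; nlinarith
      rw [hDdef]
      constructor
      · exact_mod_cast b1
      constructor
      · exact_mod_cast b2
      constructor
      · exact_mod_cast b3
      · exact_mod_cast b4
    · rintro ⟨h1, h2, h3, h4⟩
      rw [hDdef] at h2 h4
      have c1 : (0 : ℝ) < (d : ℝ) * p.1 - c * p.2 := by exact_mod_cast h1
      have c2 : (d : ℝ) * p.1 - c * p.2 < 2 * ((a : ℝ) * d - b * c) := by exact_mod_cast h2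
      have c3 : (0 : ℝ) < (a : ℝ) * p.2 - b * p.1 := by exact_mod_cast h3
      have c4 : (a : ℝ) * p.2 - b * p.1 < 2 * ((a : ℝ) * d - b * c) := by exact_mod_cast h4
      have hX : (2 : ℝ) * ((a : ℝ) * d - b * c) ≠ 0 := by positivity
      refine ⟨((d : ℝ) * p.1 - c * p.2) / (2 * ((a : ℝ) * d - b * c)),
        ((a : ℝ) * p.2 - b * p.1) / (2 * ((a : ℝ) * d - b * c)), ?_, ?_, ?_, ?_, ?_, ?_⟩
      · positivity
      · rw [div_lt_one (by positivity)]; exact c2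
      · positivity
      · rw [div_lt_one (by positivity)]; exact c4
      · rw [div_mul_eq_mul_div, div_mul_eq_mul_div, ← add_div, eq_div_iff hX]; ring
      · rw [div_mul_eq_mul_div, div_mul_eq_mul_div, ← add_div, eq_div_iff hX]; ring
  -- the unimodular change of variables
  set φ : ℤ × ℤ → ℤ × ℤ := fun jk => (a * jk.1 - y * jk.2, b * jk.1 + x * jk.2) with hφdef
  have hφinj : Function.Injective φ := by
    rintro ⟨j, k⟩ ⟨j', k'⟩ hEq
    simp only [hφdef, Prod.mk.injEq] at hEq
    obtain ⟨e1, e2⟩ := hEq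
    have hj : j = j' := by linear_combination x * e1 + y * e2 - (j - j') * hx
    have hk : k = k' := by linear_combination (-b) * e1 + a * e2 - (k - k') * hx
    simp [hj, hk]
  set q : ℤ → ℤ := fun k => (-(k * e)) / D with hqdef
  set F : Finset (ℤ × ℤ) :=
    ((Finset.Ioo 0 (2 * D)).image (fun k => (q k + 1, k))) ∪
    (((Finset.Ioo 0 (2 * D)).erase D).image (fun k => (q k + 2, k))) with hFdef
  have hmemF : ∀ j k : ℤ, (j, k) ∈ F ↔
      (0 < k ∧ k < 2 * D ∧ (j = q k + 1 ∨ (j = q k + 2 ∧ k ≠ D))) := by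
    intro j k
    simp only [hFdef, Finset.mem_union, Finset.mem_image, Finset.mem_Ioo, Finset.mem_erase,
      Prod.mk.injEq]
    constructor
    · rintro (⟨k', ⟨hk1, hk2⟩, hj, rfl⟩ | ⟨k', ⟨hne, hk1, hk2⟩, hj, rfl⟩)
      · exact ⟨hk1, hk2, Or.inl hj.symm⟩
      · exact ⟨hk1, hk2, Or.inr ⟨hj.symm, hne⟩⟩
    · rintro ⟨hk1, hk2, (rfl | ⟨rfl, hne⟩)⟩
      · exact Or.inl ⟨k, ⟨hk1, hk2⟩, rfl, rfl⟩
      · exact Or.inr ⟨k, ⟨hne, hk1, hk2⟩, rfl, rfl⟩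
  have hSF : {p : ℤ × ℤ | 0 < d * p.1 - c * p.2 ∧ d * p.1 - c * p.2 < 2 * D ∧
          0 < a * p.2 - b * p.1 ∧ a * p.2 - b * p.1 < 2 * D} = φ '' (↑F) := by
    ext p
    simp only [Set.mem_setOf_eq, Set.mem_image, Finset.mem_coe]
    constructor
    · rintro ⟨h1, h2, h3, h4⟩
      refine ⟨(x * p.1 + y * p.2, a * p.2 - b * p.1), ?_, ?_⟩
      · set k : ℤ := a * p.2 - b * p.1 with hkdef
        set j : ℤ := x * p.1 + y * p.2 with hjdef
        have hkey : j * D + k * e = d * p.1 - c * p.2 := by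
          rw [hjdef, hkdef, hDdef, hedef]
          linear_combination (d * p.1 - c * p.2) * hx
        have hiq := (fiber_iff D e k j hD hco h3 h4).mp (by rw [hkey]; exact ⟨h1, h2⟩)
        rw [hmemF j k]
        exact ⟨h3, h4, by simpa [hqdef] using hiq⟩
      · have hp1 : a * (x * p.1 + y * p.2) - y * (a * p.2 - b * p.1) = p.1 := by
          linear_combination p.1 * hx
        have hp2 : b * (x * p.1 + y * p.2) + x * (a * p.2 - b * p.1) = p.2 := by
          linear_combination p.2 * hx
        simp only [hφdef]
        exact Prod.ext hp1 hp2
    · rintro ⟨⟨j, k⟩, hmem, rfl⟩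
      obtain ⟨hk1, hk2, hdisj⟩ := (hmemF j k).mp hmem
      have hv : a * (b * j + x * k) - b * (a * j - y * k) = k := by
        linear_combination k * hx
      have hu2 : d * (a * j - y * k) - c * (b * j + x * k) = j * D + k * e := by
        rw [hDdef, hedef]; ring
      have hiq := (fiber_iff D e k j hD hco hk1 hk2).mpr (by simpa [hqdef] using hdisj)
      simp only [hφdef]
      rw [hu2, hv]
      exact ⟨hiq.1, hiq.2, hk1, hk2⟩
  rw [hSB, hSF, Set.ncard_image_of_injective _ hφinj, Set.ncard_coe_finset]
  have hdisjF : Disjoint ((Finset.Ioo 0 (2 * D)).image (fun k => (q k + 1, k)))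
      (((Finset.Ioo 0 (2 * D)).erase D).image (fun k => (q k + 2, k))) := by
    rw [Finset.disjoint_left]
    rintro ⟨j, k⟩ hA hB
    obtain ⟨k1, _, hEq1⟩ := Finset.mem_image.mp hA
    obtain ⟨k2, _, hEq2⟩ := Finset.mem_image.mp hB
    rw [Prod.mk.injEq] at hEq1 hEq2
    obtain ⟨ha1, ha2⟩ := hEq1
    obtain ⟨hb1, hb2⟩ := hEq2
    subst ha2; subst hb2
    omega
  have hinj1 : Function.Injective (fun k : ℤ => (q k + 1, k)) := by
    intro k k' hEq
    simpa using congrArg Prod.snd hEq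
  have hinj2 : Function.Injective (fun k : ℤ => (q k + 2, k)) := by
    intro k k' hEq
    simpa using congrArg Prod.snd hEq
  rw [hFdef, Finset.card_union_of_disjoint hdisjF,
    Finset.card_image_of_injective _ hinj1, Finset.card_image_of_injective _ hinj2,
    Finset.card_erase_of_mem (Finset.mem_Ioo.mpr ⟨hD, by linarith⟩), Int.card_Ioo]
  omega

/-- For coprime integer vectors `(a,b)` and `(c,d)` with `a*d - b*c ≠ 0`,
the number of integer points in the open parallelogram spanned by `(2a,2b)` and `(2c,2d)`
is `4*|a*d - b*c| - 3`. -/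
theorem stmt_4 (a b c d : ℤ) (hab : Int.gcd a b = 1) (hcd : Int.gcd c d = 1)
    (h : a * d - b * c ≠ 0) :
    {p : ℤ × ℤ | ∃ s t : ℝ, 0 < s ∧ s < 1 ∧ 0 < t ∧ t < 1 ∧
        (p.1 : ℝ) = s * (2 * a) + t * (2 * c) ∧ (p.2 : ℝ) = s * (2 * b) + t * (2 * d)}.ncard
      = 4 * (a * d - b * c).natAbs - 3 := by
  rcases lt_or_gt_of_ne h with hneg | hpos
  · have hswap : {p : ℤ × ℤ | ∃ s t : ℝ, 0 < s ∧ s < 1 ∧ 0 < t ∧ t < 1 ∧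
        (p.1 : ℝ) = s * (2 * a) + t * (2 * c) ∧ (p.2 : ℝ) = s * (2 * b) + t * (2 * d)}
      = {p : ℤ × ℤ | ∃ s t : ℝ, 0 < s ∧ s < 1 ∧ 0 < t ∧ t < 1 ∧
        (p.1 : ℝ) = s * (2 * c) + t * (2 * a) ∧ (p.2 : ℝ) = s * (2 * d) + t * (2 * b)} := by
      ext p
      simp only [Set.mem_setOf_eq]
      constructor
      · rintro ⟨s, t, h1, h2, h3, h4, h5, h6⟩
        exact ⟨t, s, h3, h4, h1, h2, by rw [h5]; ring, by rw [h6]; ring⟩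
      · rintro ⟨s, t, h1, h2, h3, h4, h5, h6⟩
        exact ⟨t, s, h3, h4, h1, h2, by rw [h5]; ring, by rw [h6]; ring⟩
    have hD' : 0 < c * b - d * a := by linarith
    have := stmt_aux c d a b hcd hab hD'
    rw [hswap, this]
    have habs : (c * b - d * a).natAbs = (a * d - b * c).natAbs := by
      have hE : c * b - d * a = -(a * d - b * c) := by ring
      rw [hE, Int.natAbs_neg]
    rw [habs]
  · exact stmt_aux a b c d hab hcd hpos
end

section
/- Let M be a finite set of rational numbers and let f ∈ M. Then there exist rational numbers x and y with x < y < f such that, writing f = f2/f1, x = x2/x1, y = y2/y1 in lowest terms with positive denominators f1, x1, y1, one has |x1·y2 − x2·y1| = 1, |x1·f2 − x2·f1| = 1, and |y1·f2 − y2·f1| = 1, and moreover there is no q ∈ M with x ≤ q < f. -/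
lemma farey_aux (f : ℚ) (P Q : ℤ) (hQ : 0 < Q) (hdet : f.num * Q - (f.den : ℤ) * P = 1) :
    ((P : ℚ) / Q).num = P ∧ (((P : ℚ) / Q).den : ℤ) = Q ∧
      f - (P : ℚ) / Q = 1 / ((f.den : ℚ) * Q) := by
  have hcop : Nat.Coprime P.natAbs Q.natAbs := by
    have h : IsCoprime P Q := ⟨-(f.den : ℤ), f.num, by linarith⟩
    exact Int.isCoprime_iff_gcd_eq_one.mp h
  have hb : (0 : ℤ) < (f.den : ℤ) := by exact_mod_cast f.pos
  have hbQ : (0 : ℚ) < (f.den : ℚ) * Q := by positivity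
  refine ⟨Rat.num_div_eq_of_coprime hQ hcop, Rat.den_div_eq_of_coprime hQ hcop, ?_⟩
  have hQ' : ((Q : ℚ)) ≠ 0 := by positivity
  have hf : ((f.num : ℚ)) / (f.den : ℚ) = f := Rat.num_div_den f
  have hd' : ((f.den : ℚ)) ≠ 0 := by positivity
  have h1 : (f.num : ℚ) / (f.den : ℚ) - (P : ℚ) / Q
      = ((f.num : ℚ) * Q - (f.den : ℚ) * P) / ((f.den : ℚ) * Q) := div_sub_div _ _ hd' hQ'
  conv_lhs => rw [← hf]
  rw [h1]
  congr 1
  exact_mod_cast hdet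

lemma below_bound (M : Finset ℚ) (f : ℚ) : ∃ c : ℚ, c < f ∧ ∀ m ∈ M, m < f → m ≤ c := by
  classical
  by_cases hne : (M.filter (fun x => x < f)).Nonempty
  · refine ⟨(M.filter (fun x => x < f)).max' hne, ?_, ?_⟩
    · exact (Finset.mem_filter.mp ((M.filter (fun x => x < f)).max'_mem hne)).2
    · intro m hm hmf
      have hmem : m ∈ M.filter (fun x => x < f) := Finset.mem_filter.mpr ⟨hm, hmf⟩
      exact Finset.le_max' _ m hmem
  · refine ⟨f - 1, by linarith, ?_⟩
    intro m hm hmf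
    exact absurd ⟨m, Finset.mem_filter.mpr ⟨hm, hmf⟩⟩ hne

/-- Given a finite set `M` of rationals and `f ∈ M`, there are rationals
`x < y < f` forming a Farey-1 triple with `f` (writing each rational in lowest terms with
positive denominator, each pair `p, q` satisfies `|p.den * q.num - p.num * q.den| = 1`),
such that no `q ∈ M` satisfies `x ≤ q < f`. -/
theorem stmt_6 (M : Finset ℚ) (f : ℚ) (hf : f ∈ M) :
    ∃ x y : ℚ, x < y ∧ y < f ∧
      |(x.den : ℤ) * y.num - x.num * (y.den : ℤ)| = 1 ∧
      |(x.den : ℤ) * f.num - x.num * (f.den : ℤ)| = 1 ∧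
      |(y.den : ℤ) * f.num - y.num * (f.den : ℤ)| = 1 ∧
      ∀ q ∈ M, ¬(x ≤ q ∧ q < f) := by
  set a : ℤ := f.num with ha
  set b : ℤ := (f.den : ℤ) with hbdef
  have hb : (0 : ℤ) < b := by rw [hbdef]; exact_mod_cast f.pos
  -- Bezout
  have hgcd : Int.gcd a b = 1 := f.reduced
  obtain ⟨s, t, hst⟩ : ∃ s t : ℤ, a * s + b * t = 1 := by
    refine ⟨Int.gcdA a b, Int.gcdB a b, ?_⟩
    have := Int.gcd_eq_gcd_ab a b
    rw [hgcd] at this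
    exact_mod_cast this.symm
  -- a bound below f dominating all elements of M below f
  obtain ⟨c, hcf, hc⟩ := below_bound M f
  set ε : ℚ := f - c with hε
  have hεpos : 0 < ε := by simp [hε]; linarith
  obtain ⟨N, hN⟩ := exists_int_gt (1 / ε)
  set N' : ℤ := max N 1 with hN'
  have hN'1 : 1 ≤ N' := le_max_right _ _
  set k : ℤ := N' + |s| with hk
  have hk0 : 0 ≤ k := by positivity
  set P : ℤ := -t + k * a with hP
  set Q : ℤ := s + k * b with hQdef
  set P' : ℤ := -t + (k + 1) * a with hP'
  set Q' : ℤ := s + (k + 1) * b with hQ'def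
  have hQN : N' ≤ Q := by
    have h1 : k ≤ k * b := le_mul_of_one_le_right hk0 hb
    have h2 : -|s| ≤ s := neg_abs_le s
    simp only [hQdef, hk] at *
    linarith
  have hQpos : 0 < Q := lt_of_lt_of_le hN'1 hQN
  have hQQ' : Q' = Q + b := by simp only [hQ'def, hQdef]; ring
  have hQ'pos : 0 < Q' := by rw [hQQ']; linarith
  have hdet : a * Q - b * P = 1 := by
    simp only [hQdef, hP]; linear_combination hst
  have hdet' : a * Q' - b * P' = 1 := by
    simp only [hQ'def, hP']; linear_combination hst
  obtain ⟨hxn, hxd, hxsub⟩ := farey_aux f P Q hQpos hdet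
  obtain ⟨hyn, hyd, hysub⟩ := farey_aux f P' Q' hQ'pos hdet'
  set x : ℚ := (P : ℚ) / Q with hx
  set y : ℚ := (P' : ℚ) / Q' with hy
  have hdetxy : Q * P' - P * Q' = 1 := by
    simp only [hQdef, hP, hQ'def, hP']; linear_combination hst
  have hxy : x < y := by
    rw [hx, hy, div_lt_div_iff₀ (by exact_mod_cast hQpos) (by exact_mod_cast hQ'pos)]
    have : P * Q' < P' * Q := by linarith [hdetxy]
    exact_mod_cast this
  have hbQ : (0 : ℚ) < (f.den : ℚ) * Q := by positivity
  have hbQ' : (0 : ℚ) < (f.den : ℚ) * Q' := by positivity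
  have hyf : y < f := by
    have : f - y = 1 / ((f.den : ℚ) * Q') := hysub
    have hpos : 0 < f - y := by rw [this]; positivity
    linarith
  refine ⟨x, y, hxy, hyf, ?_, ?_, ?_, ?_⟩
  · rw [hxd, hxn, hyn, hyd]
    rw [show Q * P' - P * Q' = 1 from hdetxy]
    norm_num
  · rw [hxd, hxn]
    rw [show Q * a - P * b = 1 by linarith [hdet]]
    norm_num
  · rw [hyd, hyn]
    rw [show Q' * a - P' * b = 1 by linarith [hdet']]
    norm_num
  · rintro q hq ⟨hxq, hqf⟩
    have hqc : q ≤ c := hc q hq hqf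
    -- f - x = 1/(b*Q) < ε
    have hQbig : 1 / ε < ((f.den : ℚ) * Q) := by
      have h1 : N' ≤ b * Q := le_trans hQN (le_mul_of_one_le_left hQpos.le hb)
      have h2 : (N : ℚ) ≤ ((b * Q : ℤ) : ℚ) := by
        exact_mod_cast le_trans (le_max_left N 1) h1
      have h3 : ((b * Q : ℤ) : ℚ) = (f.den : ℚ) * Q := by push_cast [hbdef]; ring
      linarith [h2, hN, h3.symm.le]
    have hfx : f - x < ε := by
      rw [hxsub, div_lt_iff₀ hbQ]
      have h1 : 1 / ε < (f.den : ℚ) * Q := hQbig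
      rw [div_lt_iff₀ hεpos] at h1
      linarith
    have : f - q ≥ ε := by simp only [hε] at *; linarith
    linarith
end

section
/- Every element of G is either a point reflection r_p : x ↦ 2p − x for some p ∈ ℤ², or a translation x ↦ x + 2q for some q ∈ ℤ²; and conversely, every point reflection r_p with p ∈ ℤ² and every translation x ↦ x + 2q with q ∈ ℤ² belongs to G. -/
/-- The point reflection `x ↦ 2p - x` of the plane `ℝ²` about an integer point `p`. -/
noncomputable def ptRefl (p : ℤ × ℤ) : Equiv.Perm (ℝ × ℝ) :=
  Equiv.pointReflection ((p.1 : ℝ), (p.2 : ℝ))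

/-- The translation `x ↦ x + 2q` of the plane `ℝ²` by an even integer vector `2q`. -/
noncomputable def evenTransl (q : ℤ × ℤ) : Equiv.Perm (ℝ × ℝ) :=
  Equiv.addRight ((2 * q.1 : ℤ), (2 * q.2 : ℤ))

/-- The subgroup `G` of the group of bijections of `ℝ²` generated by the point
reflections about integer points. -/
noncomputable def Ggrp : Subgroup (Equiv.Perm (ℝ × ℝ)) :=
  Subgroup.closure (Set.range ptRefl)

lemma ptRefl_apply (p : ℤ × ℤ) (x : ℝ × ℝ) :
    ptRefl p x = ((p.1 : ℝ) + p.1 - x.1, (p.2 : ℝ) + p.2 - x.2) := by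
  simp [ptRefl, Equiv.pointReflection_apply, Prod.ext_iff]
  constructor <;> ring

lemma evenTransl_apply (q : ℤ × ℤ) (x : ℝ × ℝ) :
    evenTransl q x = (x.1 + 2 * q.1, x.2 + 2 * q.2) := by
  simp [evenTransl, Prod.ext_iff]

lemma ptRefl_mul_ptRefl (p q : ℤ × ℤ) : ptRefl p * ptRefl q = evenTransl (p - q) := by
  ext x <;> simp [Equiv.Perm.mul_apply, ptRefl_apply, evenTransl_apply] <;> push_cast <;> ring

lemma ptRefl_mul_evenTransl (p q : ℤ × ℤ) : ptRefl p * evenTransl q = ptRefl (p - q) := by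
  ext x <;> simp [Equiv.Perm.mul_apply, ptRefl_apply, evenTransl_apply] <;> push_cast <;> ring

lemma evenTransl_mul_ptRefl (q p : ℤ × ℤ) : evenTransl q * ptRefl p = ptRefl (p + q) := by
  ext x <;> simp [Equiv.Perm.mul_apply, ptRefl_apply, evenTransl_apply] <;> push_cast <;> ring

lemma evenTransl_mul_evenTransl (q q' : ℤ × ℤ) :
    evenTransl q * evenTransl q' = evenTransl (q + q') := by
  ext x <;> simp [Equiv.Perm.mul_apply, evenTransl_apply] <;> push_cast <;> ring

lemma ptRefl_inv (p : ℤ × ℤ) : (ptRefl p)⁻¹ = ptRefl p := by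
  rw [inv_eq_iff_mul_eq_one, ptRefl_mul_ptRefl]
  ext x <;> simp [evenTransl_apply, Equiv.Perm.one_apply]

lemma evenTransl_inv (q : ℤ × ℤ) : (evenTransl q)⁻¹ = evenTransl (-q) := by
  rw [inv_eq_iff_mul_eq_one, evenTransl_mul_evenTransl]
  ext x <;> simp [evenTransl_apply]

/-- An element of the group of bijections of `ℝ²` lies in `G` if and only if
it is a point reflection about an integer point or a translation by an even integer
vector. -/
theorem stmt_7 (g : Equiv.Perm (ℝ × ℝ)) :
    g ∈ Ggrp ↔ (∃ p : ℤ × ℤ, g = ptRefl p) ∨ (∃ q : ℤ × ℤ, g = evenTransl q) := by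
  constructor
  · intro hg
    induction hg using Subgroup.closure_induction with
    | mem x hx => obtain ⟨p, rfl⟩ := hx; exact Or.inl ⟨p, rfl⟩
    | one =>
      refine Or.inr ⟨0, ?_⟩
      ext x <;> simp [evenTransl_apply, Equiv.Perm.one_apply]
    | mul a b _ _ ha hb =>
      rcases ha with ⟨p, rfl⟩ | ⟨q, rfl⟩ <;> rcases hb with ⟨p', rfl⟩ | ⟨q', rfl⟩
      · exact Or.inr ⟨p - p', ptRefl_mul_ptRefl p p'⟩
      · exact Or.inl ⟨p - q', ptRefl_mul_evenTransl p q'⟩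
      · exact Or.inl ⟨p' + q, evenTransl_mul_ptRefl q p'⟩
      · exact Or.inr ⟨q + q', evenTransl_mul_evenTransl q q'⟩
    | inv a _ ha =>
      rcases ha with ⟨p, rfl⟩ | ⟨q, rfl⟩
      · exact Or.inl ⟨p, ptRefl_inv p⟩
      · exact Or.inr ⟨-q, evenTransl_inv q⟩
  · rintro (⟨p, rfl⟩ | ⟨q, rfl⟩)
    · exact Subgroup.subset_closure ⟨p, rfl⟩
    · have h : evenTransl q = ptRefl q * ptRefl 0 := by
        rw [ptRefl_mul_ptRefl]; simp
      rw [h]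
      exact mul_mem (Subgroup.subset_closure ⟨q, rfl⟩) (Subgroup.subset_closure ⟨0, rfl⟩)
end

section
/- Let P = {x ∈ ℤ^6 : x1 + x2 + x3 = 0, x1 = x4, x2 = x5, x3 = x6}. Then the set {σ·v4(a,b) : σ ∈ Z, a and b integers with a ≥ 0, b ≥ 1, gcd(a,b) = 1} equals the set of all x ∈ P whose six entries have greatest common divisor 1. -/
/-- The vector `v4(a,b) = (−b, a, b−a, −b, a, b−a) ∈ ℤ^6`. -/
def v4 (a b : ℤ) : Fin 6 → ℤ := ![-b, a, b - a, -b, a, b - a]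

/-- The permutation `(123)(456)` of `{1,…,6}`, on 0-indexed `Fin 6`:
`0 ↦ 1 ↦ 2 ↦ 0` and `3 ↦ 4 ↦ 5 ↦ 3`. -/
def zgen : Equiv.Perm (Fin 6) :=
  Equiv.swap 0 1 * Equiv.swap 1 2 * (Equiv.swap 3 4 * Equiv.swap 4 5)

/-- The cyclic group `Z = ⟨(123)(456)⟩`. -/
def Zgrp : Subgroup (Equiv.Perm (Fin 6)) := Subgroup.closure {zgen}

/-- A permutation `σ` acts on `ℤ^6` by permuting coordinates: the `σ(i)`-th entry of
`σ·x` is the `i`-th entry of `x`; equivalently `(σ·x) j = x (σ⁻¹ j)`. -/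
def permAct (σ : Equiv.Perm (Fin 6)) (x : Fin 6 → ℤ) : Fin 6 → ℤ :=
  fun j => x (σ⁻¹ j)

lemma zgen_pow3 : zgen ^ (3:ℕ) = 1 := by decide

lemma mem_Zgrp_iff (σ : Equiv.Perm (Fin 6)) :
    σ ∈ Zgrp ↔ σ = 1 ∨ σ = zgen ∨ σ = zgen ^ 2 := by
  constructor
  · intro h
    rcases Subgroup.mem_closure_singleton.mp h with ⟨n, hn⟩
    have h3 : zgen ^ (3:ℤ) = 1 := by
      rw [show (3:ℤ) = ((3:ℕ):ℤ) from rfl, zpow_natCast, zgen_pow3]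
    have key : zgen ^ n = zgen ^ (n % 3) := by
      conv_lhs => rw [show n = 3 * (n / 3) + n % 3 by omega]
      rw [zpow_add, zpow_mul, h3, one_zpow, one_mul]
    have hm : n % 3 = 0 ∨ n % 3 = 1 ∨ n % 3 = 2 := by omega
    rcases hm with hm | hm | hm <;> rw [← hn, key, hm]
    · left; exact zpow_zero _
    · right; left; exact zpow_one _
    · right; right
      rw [show (2:ℤ) = ((2:ℕ):ℤ) from rfl, zpow_natCast]
  · rintro (h | h | h) <;> subst h
    · exact one_mem _
    · exact Subgroup.mem_closure_singleton.mpr ⟨1, zpow_one _⟩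
    · exact Subgroup.mem_closure_singleton.mpr ⟨2, by
        rw [show (2:ℤ) = ((2:ℕ):ℤ) from rfl, zpow_natCast]⟩

lemma normalize_eq_self_int {g : ℤ} (h : g ∣ 1) (h2 : normalize g = g) : g = 1 := by
  rcases Int.isUnit_iff.mp (isUnit_of_dvd_one h) with h1 | h1 <;> subst h1
  · rfl
  · have : normalize (-1:ℤ) = 1 := normalize_eq_one.mpr (IsUnit.neg isUnit_one)
    rw [this] at h2; exact absurd h2 (by norm_num)

lemma permAct_one_v4 (a b : ℤ) : permAct 1 (v4 a b) = v4 a b := rfl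

lemma permAct_zgen_v4 (a b : ℤ) :
    permAct zgen (v4 a b) = ![b - a, -b, a, b - a, -b, a] := by
  funext j; fin_cases j <;> rfl

lemma permAct_zgen2_v4 (a b : ℤ) :
    permAct (zgen ^ 2) (v4 a b) = ![a, b - a, -b, a, b - a, -b] := by
  funext j; fin_cases j <;> rfl

/-- If a natural number divides (as an integer) `y 0` and `y 1` of a vector in the plane
with gcd one, then it is 1. -/
lemma dvd01_eq_one (y : Fin 6 → ℤ)
    (hsum : y 0 + y 1 + y 2 = 0) (h03 : y 0 = y 3) (h14 : y 1 = y 4) (h25 : y 2 = y 5)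
    (hgcd : Finset.univ.gcd y = 1) (d : ℕ)
    (d0 : (d:ℤ) ∣ y 0) (d1 : (d:ℤ) ∣ y 1) : d = 1 := by
  have d2 : (d:ℤ) ∣ y 2 := by
    rw [show y 2 = -y 0 - y 1 by omega]
    exact (dvd_neg.mpr d0).sub d1
  have hdvd : (d:ℤ) ∣ Finset.univ.gcd y := by
    refine Finset.dvd_gcd ?_
    intro i _
    fin_cases i
    · exact d0
    · exact d1
    · exact d2
    · exact h03 ▸ d0
    · exact h14 ▸ d1
    · exact h25 ▸ d2
  rw [hgcd] at hdvd
  exact Nat.dvd_one.mp (by exact_mod_cast hdvd)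

/-- the orbit of the vectors `v4(a,b)` (with `a ≥ 0`, `b ≥ 1`,
`gcd(a,b) = 1`) under `Z` equals the set of integer vectors in the plane
`x₁+x₂+x₃ = 0, x₁ = x₄, x₂ = x₅, x₃ = x₆` whose six entries have gcd 1. -/
theorem stmt_13 :
    {y : Fin 6 → ℤ | ∃ σ ∈ Zgrp, ∃ a b : ℤ,
        0 ≤ a ∧ 1 ≤ b ∧ Int.gcd a b = 1 ∧ y = permAct σ (v4 a b)} =
    {x : Fin 6 → ℤ | (x 0 + x 1 + x 2 = 0 ∧ x 0 = x 3 ∧ x 1 = x 4 ∧ x 2 = x 5) ∧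
        Finset.univ.gcd x = 1} := by
  ext y
  simp only [Set.mem_setOf_eq]
  constructor
  · rintro ⟨σ, hσ, a, b, ha, hb, hab, rfl⟩
    have hgcd1 : Finset.univ.gcd (permAct σ (v4 a b)) = 1 := by
      set g : ℤ := Finset.univ.gcd (permAct σ (v4 a b)) with hg
      have hda : g ∣ a := by
        have := Finset.gcd_dvd (f := permAct σ (v4 a b)) (Finset.mem_univ (σ 1))
        have e : permAct σ (v4 a b) (σ 1) = a := by simp [permAct, v4]
        rw [e] at this; exact this
      have hdb : g ∣ -b := by
        have := Finset.gcd_dvd (f := permAct σ (v4 a b)) (Finset.mem_univ (σ 0))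
        have e : permAct σ (v4 a b) (σ 0) = -b := by simp [permAct, v4]
        rw [e] at this; exact this
      have : g ∣ ((Int.gcd a b : ℤ)) := Int.dvd_coe_gcd hda ((dvd_neg).mp hdb)
      rw [hab] at this
      exact normalize_eq_self_int (by simpa using this) Finset.normalize_gcd
    rcases (mem_Zgrp_iff σ).mp hσ with h | h | h <;> subst h <;>
        refine ⟨⟨?_, ?_, ?_, ?_⟩, hgcd1⟩
    · rw [permAct_one_v4]; show -b + a + (b - a) = 0; ring
    · rw [permAct_one_v4]; rfl
    · rw [permAct_one_v4]; rfl
    · rw [permAct_one_v4]; rfl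
    · rw [permAct_zgen_v4]; show (b - a) + -b + a = 0; ring
    · rw [permAct_zgen_v4]; rfl
    · rw [permAct_zgen_v4]; rfl
    · rw [permAct_zgen_v4]; rfl
    · rw [permAct_zgen2_v4]; show a + (b - a) + -b = 0; ring
    · rw [permAct_zgen2_v4]; rfl
    · rw [permAct_zgen2_v4]; rfl
    · rw [permAct_zgen2_v4]; rfl
  · rintro ⟨⟨hsum, h03, h14, h25⟩, hgcd⟩
    have hne : ¬(y 0 = 0 ∧ y 1 = 0 ∧ y 2 = 0) := by
      rintro ⟨e0, e1, e2⟩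
      have : Finset.univ.gcd y = 0 := by
        refine Finset.gcd_eq_zero_iff.mpr ?_
        intro i _
        fin_cases i
        · exact e0
        · exact e1
        · exact e2
        · exact h03 ▸ e0
        · exact h14 ▸ e1
        · exact h25 ▸ e2
      rw [hgcd] at this; exact one_ne_zero this
    have hcase : (y 0 < 0 ∧ 0 ≤ y 1) ∨ (y 1 < 0 ∧ 0 ≤ y 2) ∨ (y 2 < 0 ∧ 0 ≤ y 0) := by
      omega
    rcases hcase with ⟨hp, hq⟩ | ⟨hq, hr⟩ | ⟨hr, hp⟩
    · refine ⟨1, one_mem _, y 1, -(y 0), hq, by omega, ?_, ?_⟩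
      · exact dvd01_eq_one y hsum h03 h14 h25 hgcd _
          (by simpa using (Int.gcd_dvd_right (a := y 1) (b := -(y 0)))) (Int.gcd_dvd_left _ _)
      · rw [permAct_one_v4]
        funext j; fin_cases j
        · show y 0 = -(-(y 0)); omega
        · show y 1 = y 1; rfl
        · show y 2 = -(y 0) - y 1; omega
        · show y 3 = -(-(y 0)); omega
        · show y 4 = y 1; omega
        · show y 5 = -(y 0) - y 1; omega
    · refine ⟨zgen, (mem_Zgrp_iff zgen).mpr (Or.inr (Or.inl rfl)), y 2, -(y 1), hr,
        by omega, ?_, ?_⟩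
      · have d1 : ((Int.gcd (y 2) (-(y 1)) : ℕ) : ℤ) ∣ y 1 := by
          simpa using (Int.gcd_dvd_right (a := y 2) (b := -(y 1)))
        have d2 : ((Int.gcd (y 2) (-(y 1)) : ℕ) : ℤ) ∣ y 2 := Int.gcd_dvd_left _ _
        have d0 : ((Int.gcd (y 2) (-(y 1)) : ℕ) : ℤ) ∣ y 0 := by
          rw [show y 0 = -y 1 - y 2 by omega]
          exact (dvd_neg.mpr d1).sub d2
        exact dvd01_eq_one y hsum h03 h14 h25 hgcd _ d0 d1
      · rw [permAct_zgen_v4]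
        funext j; fin_cases j
        · show y 0 = -(y 1) - y 2; omega
        · show y 1 = -(-(y 1)); omega
        · show y 2 = y 2; rfl
        · show y 3 = -(y 1) - y 2; omega
        · show y 4 = -(-(y 1)); omega
        · show y 5 = y 2; omega
    · refine ⟨zgen ^ 2, (mem_Zgrp_iff _).mpr (Or.inr (Or.inr rfl)), y 0, -(y 2), hp,
        by omega, ?_, ?_⟩
      · have d0 : ((Int.gcd (y 0) (-(y 2)) : ℕ) : ℤ) ∣ y 0 := Int.gcd_dvd_left _ _
        have d2 : ((Int.gcd (y 0) (-(y 2)) : ℕ) : ℤ) ∣ y 2 := by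
          simpa using (Int.gcd_dvd_right (a := y 0) (b := -(y 2)))
        have d1 : ((Int.gcd (y 0) (-(y 2)) : ℕ) : ℤ) ∣ y 1 := by
          rw [show y 1 = -y 0 - y 2 by omega]
          exact (dvd_neg.mpr d0).sub d2
        exact dvd01_eq_one y hsum h03 h14 h25 hgcd _ d0 d1
      · rw [permAct_zgen2_v4]
        funext j; fin_cases j
        · show y 0 = y 0; rfl
        · show y 1 = -(y 2) - y 0; omega
        · show y 2 = -(-(y 2)); omega
        · show y 3 = y 0; omega
        · show y 4 = -(y 2) - y 0; omega
        · show y 5 = -(-(y 2)); omega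
end

section
/- The following two subsets of ℤ^6 are equal. The first set consists of all σ·v_i(a,b) where σ ranges over the group W, i ranges over {1,2,3,4}, and (a,b) ranges over pairs of integers with a ≥ 0, b ≥ 1, gcd(a,b) = 1. The second set is the union of: (i) all σ·v1(a,b) with σ ∈ Z·X and a ≥ 0, b ≥ 1, gcd(a,b) = 1; (ii) all σ·u2(a,b) with σ ∈ Z·X and a ≥ 1, b ≥ 0, gcd(a,b) = 1; (iii) all σ·v3(a,b) with σ ∈ Z·Y and a ≥ 0, b ≥ 1, gcd(a,b) = 1; (iv) all σ·v4(a,b) with σ ∈ Z and a ≥ 0, b ≥ 1, gcd(a,b) = 1. -/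
open scoped Pointwise

/-- `v1(a,b) = (−⌊(b−1)/2⌋, ⌊a/2⌋+1, ⌊(b−a)/2⌋, −⌊b/2⌋, ⌊(a+1)/2⌋, ⌊(b−a−1)/2⌋)`.
(Note: `(· / 2)` on `ℤ` rounds down since the divisor is positive.) -/
def v1 (a b : ℤ) : Fin 6 → ℤ :=
  ![-((b - 1) / 2), a / 2 + 1, (b - a) / 2, -(b / 2), (a + 1) / 2, (b - a - 1) / 2]

/-- `v2(a,b) = (−⌊a/2⌋−1, ⌊(b−1)/2⌋, ⌊(a−b+1)/2⌋, −⌊(a+1)/2⌋, ⌊b/2⌋, ⌊(a−b)/2⌋+1)`. -/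
def v2 (a b : ℤ) : Fin 6 → ℤ :=
  ![-(a / 2) - 1, (b - 1) / 2, (a - b + 1) / 2, -((a + 1) / 2), b / 2, (a - b) / 2 + 1]

/-- `v3(a,b) = (−⌊b/2⌋, ⌊(a+1)/2⌋, ⌊(b−a+1)/2⌋, −⌊(b+1)/2⌋, ⌊a/2⌋, ⌊(b−a)/2⌋)`. -/
def v3 (a b : ℤ) : Fin 6 → ℤ :=
  ![-(b / 2), (a + 1) / 2, (b - a + 1) / 2, -((b + 1) / 2), a / 2, (b - a) / 2]

/-- `u2(a,b) = (−⌊b/2⌋−1, ⌊(a−1)/2⌋, ⌊(b−a+1)/2⌋, −⌊(b+1)/2⌋, ⌊a/2⌋, ⌊(b−a)/2⌋+1)`. -/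
def u2 (a b : ℤ) : Fin 6 → ℤ :=
  ![-(b / 2) - 1, (a - 1) / 2, (b - a + 1) / 2, -((b + 1) / 2), a / 2, (b - a) / 2 + 1]

/-- The cyclic group `X = ⟨(14)(25)(36)⟩`. -/
def Xgrp : Subgroup (Equiv.Perm (Fin 6)) :=
  Subgroup.closure {Equiv.swap 0 3 * Equiv.swap 1 4 * Equiv.swap 2 5}

/-- The group `Y = ⟨(14)(36), (25)(36)⟩`. -/
def Ygrp : Subgroup (Equiv.Perm (Fin 6)) :=
  Subgroup.closure {Equiv.swap 0 3 * Equiv.swap 2 5, Equiv.swap 1 4 * Equiv.swap 2 5}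

/-- The group `W = ⟨(14), (25), (36), (123)(456)⟩`. -/
def Wgrp : Subgroup (Equiv.Perm (Fin 6)) :=
  Subgroup.closure {Equiv.swap 0 3, Equiv.swap 1 4, Equiv.swap 2 5, zgen}

-- ===== auxiliary material =====

def t1 : Equiv.Perm (Fin 6) := Equiv.swap 0 3
def t2 : Equiv.Perm (Fin 6) := Equiv.swap 1 4
def t3 : Equiv.Perm (Fin 6) := Equiv.swap 2 5
def sfl : Equiv.Perm (Fin 6) := t1 * t2 * t3
def yA : Equiv.Perm (Fin 6) := t1 * t3
def yB : Equiv.Perm (Fin 6) := t2 * t3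
def yC : Equiv.Perm (Fin 6) := t1 * t2

lemma permAct_mul (σ τ : Equiv.Perm (Fin 6)) (x : Fin 6 → ℤ) :
    permAct (σ * τ) x = permAct σ (permAct τ x) := by
  funext j; simp [permAct, mul_inv_rev]

lemma permAct_one (x : Fin 6 → ℤ) : permAct 1 x = x := rfl

lemma Zmem {g : Equiv.Perm (Fin 6)} (h : g ∈ Zgrp) :
    g = 1 ∨ g = zgen ∨ g = zgen * zgen := by
  refine Subgroup.closure_induction ?_ (Or.inl rfl) ?_ ?_ h
  · intro x hx
    rw [Set.mem_singleton_iff] at hx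
    exact Or.inr (Or.inl hx)
  · intro x y _ _ hx hy
    rcases hx with rfl | rfl | rfl <;> rcases hy with rfl | rfl | rfl <;> decide
  · intro x _ hx
    rcases hx with rfl | rfl | rfl <;> decide

lemma Xmem {g : Equiv.Perm (Fin 6)} (h : g ∈ Xgrp) : g = 1 ∨ g = sfl := by
  refine Subgroup.closure_induction ?_ (Or.inl rfl) ?_ ?_ h
  · intro x hx
    rw [Set.mem_singleton_iff] at hx
    exact Or.inr hx
  · intro x y _ _ hx hy
    rcases hx with rfl | rfl <;> rcases hy with rfl | rfl <;> decide
  · intro x _ hx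
    rcases hx with rfl | rfl <;> decide

lemma Ymem {g : Equiv.Perm (Fin 6)} (h : g ∈ Ygrp) :
    g = 1 ∨ g = yA ∨ g = yB ∨ g = yC := by
  refine Subgroup.closure_induction ?_ (Or.inl rfl) ?_ ?_ h
  · intro x hx
    simp only [Set.mem_insert_iff, Set.mem_singleton_iff] at hx
    rcases hx with rfl | rfl
    · exact Or.inr (Or.inl rfl)
    · exact Or.inr (Or.inr (Or.inl rfl))
  · intro x y _ _ hx hy
    rcases hx with rfl | rfl | rfl | rfl <;> rcases hy with rfl | rfl | rfl | rfl <;> decide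
  · intro x _ hx
    rcases hx with rfl | rfl | rfl | rfl <;> decide

lemma zgen_mem : zgen ∈ Zgrp := Subgroup.subset_closure rfl
lemma sfl_mem : sfl ∈ Xgrp := Subgroup.subset_closure rfl
lemma yA_mem : yA ∈ Ygrp := Subgroup.subset_closure (Or.inl rfl)
lemma yB_mem : yB ∈ Ygrp := Subgroup.subset_closure (Or.inr rfl)
lemma yC_mem : yC ∈ Ygrp := by
  have h : yC = yA * yB := by decide
  rw [h]; exact mul_mem yA_mem yB_mem

lemma t1_memW : t1 ∈ Wgrp := Subgroup.subset_closure (Or.inl rfl)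
lemma t2_memW : t2 ∈ Wgrp := Subgroup.subset_closure (Or.inr (Or.inl rfl))
lemma t3_memW : t3 ∈ Wgrp := Subgroup.subset_closure (Or.inr (Or.inr (Or.inl rfl)))
lemma zgen_memW : zgen ∈ Wgrp := Subgroup.subset_closure (Or.inr (Or.inr (Or.inr rfl)))

lemma ZleW : Zgrp ≤ Wgrp := by
  refine (Subgroup.closure_le _).mpr ?_
  intro g hg
  rw [Set.mem_singleton_iff] at hg
  subst hg
  exact zgen_memW

lemma XleW : Xgrp ≤ Wgrp := by
  refine (Subgroup.closure_le _).mpr ?_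
  intro g hg
  rw [Set.mem_singleton_iff] at hg
  subst hg
  exact mul_mem (mul_mem t1_memW t2_memW) t3_memW

lemma YleW : Ygrp ≤ Wgrp := by
  refine (Subgroup.closure_le _).mpr ?_
  intro g hg
  simp only [Set.mem_insert_iff, Set.mem_singleton_iff] at hg
  rcases hg with rfl | rfl
  · exact mul_mem t1_memW t3_memW
  · exact mul_mem t2_memW t3_memW

lemma not_coprime_even {a b : ℤ} (pa : a % 2 = 0) (pb : b % 2 = 0) :
    Int.gcd a b ≠ 1 := by
  intro h
  have h2a : (2 : ℤ) ∣ a := by omega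
  have h2b : (2 : ℤ) ∣ b := by omega
  have hd := Int.dvd_gcd h2a h2b
  rw [h] at hd
  norm_num at hd

def Rset : Set (Fin 6 → ℤ) :=
  {y : Fin 6 → ℤ |
      (∃ σ ∈ (Zgrp : Set (Equiv.Perm (Fin 6))) * (Xgrp : Set (Equiv.Perm (Fin 6))),
          ∃ a b : ℤ, 0 ≤ a ∧ 1 ≤ b ∧ Int.gcd a b = 1 ∧ y = permAct σ (v1 a b)) ∨
      (∃ σ ∈ (Zgrp : Set (Equiv.Perm (Fin 6))) * (Xgrp : Set (Equiv.Perm (Fin 6))),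
          ∃ a b : ℤ, 1 ≤ a ∧ 0 ≤ b ∧ Int.gcd a b = 1 ∧ y = permAct σ (u2 a b)) ∨
      (∃ σ ∈ (Zgrp : Set (Equiv.Perm (Fin 6))) * (Ygrp : Set (Equiv.Perm (Fin 6))),
          ∃ a b : ℤ, 0 ≤ a ∧ 1 ≤ b ∧ Int.gcd a b = 1 ∧ y = permAct σ (v3 a b)) ∨
      (∃ σ ∈ Zgrp, ∃ a b : ℤ, 0 ≤ a ∧ 1 ≤ b ∧ Int.gcd a b = 1 ∧
          y = permAct σ (v4 a b))}

lemma memV1 {ζ x : Equiv.Perm (Fin 6)} (hζ : ζ ∈ Zgrp) (hx : x ∈ Xgrp) {a b : ℤ}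
    (ha : 0 ≤ a) (hb : 1 ≤ b) (hg : Int.gcd a b = 1) :
    permAct (ζ * x) (v1 a b) ∈ Rset := by
  exact Or.inl ⟨ζ * x, Set.mem_mul.mpr ⟨ζ, hζ, x, hx, rfl⟩, a, b, ha, hb, hg, rfl⟩

lemma memU2 {ζ x : Equiv.Perm (Fin 6)} (hζ : ζ ∈ Zgrp) (hx : x ∈ Xgrp) {a b : ℤ}
    (ha : 1 ≤ a) (hb : 0 ≤ b) (hg : Int.gcd a b = 1) :
    permAct (ζ * x) (u2 a b) ∈ Rset := by
  exact Or.inr (Or.inl ⟨ζ * x, Set.mem_mul.mpr ⟨ζ, hζ, x, hx, rfl⟩, a, b, ha, hb, hg, rfl⟩)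

lemma memV3 {ζ x : Equiv.Perm (Fin 6)} (hζ : ζ ∈ Zgrp) (hx : x ∈ Ygrp) {a b : ℤ}
    (ha : 0 ≤ a) (hb : 1 ≤ b) (hg : Int.gcd a b = 1) :
    permAct (ζ * x) (v3 a b) ∈ Rset := by
  exact Or.inr (Or.inr (Or.inl ⟨ζ * x, Set.mem_mul.mpr ⟨ζ, hζ, x, hx, rfl⟩, a, b, ha, hb, hg, rfl⟩))

lemma memV4 {σ : Equiv.Perm (Fin 6)} (hσ : σ ∈ Zgrp) {a b : ℤ}
    (ha : 0 ≤ a) (hb : 1 ≤ b) (hg : Int.gcd a b = 1) :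
    permAct σ (v4 a b) ∈ Rset := by
  exact Or.inr (Or.inr (Or.inr ⟨σ, hσ, a, b, ha, hb, hg, rfl⟩))

lemma commX {t x : Equiv.Perm (Fin 6)} (ht : t = t1 ∨ t = t2 ∨ t = t3)
    (hx : x ∈ Xgrp) : t * x = x * t := by
  rcases Xmem hx with rfl | rfl <;> rcases ht with rfl | rfl | rfl <;> decide

lemma commY {t x : Equiv.Perm (Fin 6)} (ht : t = t1 ∨ t = t2 ∨ t = t3)
    (hx : x ∈ Ygrp) : t * x = x * t := by
  rcases Ymem hx with rfl | rfl | rfl | rfl <;> rcases ht with rfl | rfl | rfl <;> decide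

lemma stepV1 {t : Equiv.Perm (Fin 6)} (ht : t = t1 ∨ t = t2 ∨ t = t3) (a b : ℤ)
    (ha : 0 ≤ a) (hb : 1 ≤ b) (hg : Int.gcd a b = 1) :
    ∃ e, e ∈ Xgrp ∧ permAct t (v1 a b) = permAct e (v1 a b) := by
  have pa : a % 2 = 0 ∨ a % 2 = 1 := by omega
  have pb : b % 2 = 0 ∨ b % 2 = 1 := by omega
  rcases pa with pa | pa <;> rcases pb with pb | pb
  · exact absurd hg (not_coprime_even pa pb)
  · rcases ht with rfl | rfl | rfl
    · refine ⟨1, one_mem _, ?_⟩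
      funext j; fin_cases j
      · exact (by omega : -(b / 2) = -((b - 1) / 2))
      · rfl
      · rfl
      · exact (by omega : -((b - 1) / 2) = -(b / 2))
      · rfl
      · rfl
    · refine ⟨sfl, sfl_mem, ?_⟩
      funext j; fin_cases j
      · exact (by omega : -((b - 1) / 2) = -(b / 2))
      · rfl
      · exact (by omega : (b - a) / 2 = (b - a - 1) / 2)
      · exact (by omega : -(b / 2) = -((b - 1) / 2))
      · rfl
      · exact (by omega : (b - a - 1) / 2 = (b - a) / 2)
    · refine ⟨1, one_mem _, ?_⟩
      funext j; fin_cases j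
      · rfl
      · rfl
      · exact (by omega : (b - a - 1) / 2 = (b - a) / 2)
      · rfl
      · rfl
      · exact (by omega : (b - a) / 2 = (b - a - 1) / 2)
  · rcases ht with rfl | rfl | rfl
    · refine ⟨sfl, sfl_mem, ?_⟩
      funext j; fin_cases j
      · rfl
      · exact (by omega : a / 2 + 1 = (a + 1) / 2)
      · exact (by omega : (b - a) / 2 = (b - a - 1) / 2)
      · rfl
      · exact (by omega : (a + 1) / 2 = a / 2 + 1)
      · exact (by omega : (b - a - 1) / 2 = (b - a) / 2)
    · refine ⟨1, one_mem _, ?_⟩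
      funext j; fin_cases j
      · rfl
      · exact (by omega : (a + 1) / 2 = a / 2 + 1)
      · rfl
      · rfl
      · exact (by omega : a / 2 + 1 = (a + 1) / 2)
      · rfl
    · refine ⟨1, one_mem _, ?_⟩
      funext j; fin_cases j
      · rfl
      · rfl
      · exact (by omega : (b - a - 1) / 2 = (b - a) / 2)
      · rfl
      · rfl
      · exact (by omega : (b - a) / 2 = (b - a - 1) / 2)
  · rcases ht with rfl | rfl | rfl
    · refine ⟨1, one_mem _, ?_⟩
      funext j; fin_cases j
      · exact (by omega : -(b / 2) = -((b - 1) / 2))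
      · rfl
      · rfl
      · exact (by omega : -((b - 1) / 2) = -(b / 2))
      · rfl
      · rfl
    · refine ⟨1, one_mem _, ?_⟩
      funext j; fin_cases j
      · rfl
      · exact (by omega : (a + 1) / 2 = a / 2 + 1)
      · rfl
      · rfl
      · exact (by omega : a / 2 + 1 = (a + 1) / 2)
      · rfl
    · refine ⟨sfl, sfl_mem, ?_⟩
      funext j; fin_cases j
      · exact (by omega : -((b - 1) / 2) = -(b / 2))
      · exact (by omega : a / 2 + 1 = (a + 1) / 2)
      · rfl
      · exact (by omega : -(b / 2) = -((b - 1) / 2))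
      · exact (by omega : (a + 1) / 2 = a / 2 + 1)
      · rfl

lemma stepU2 {t : Equiv.Perm (Fin 6)} (ht : t = t1 ∨ t = t2 ∨ t = t3) (a b : ℤ)
    (ha : 1 ≤ a) (hb : 0 ≤ b) (hg : Int.gcd a b = 1) :
    ∃ e, e ∈ Xgrp ∧ permAct t (u2 a b) = permAct e (u2 a b) := by
  have pa : a % 2 = 0 ∨ a % 2 = 1 := by omega
  have pb : b % 2 = 0 ∨ b % 2 = 1 := by omega
  rcases pa with pa | pa <;> rcases pb with pb | pb
  · exact absurd hg (not_coprime_even pa pb)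
  · rcases ht with rfl | rfl | rfl
    · refine ⟨1, one_mem _, ?_⟩
      funext j; fin_cases j
      · exact (by omega : -((b + 1) / 2) = -(b / 2) - 1)
      · rfl
      · rfl
      · exact (by omega : -(b / 2) - 1 = -((b + 1) / 2))
      · rfl
      · rfl
    · refine ⟨sfl, sfl_mem, ?_⟩
      funext j; fin_cases j
      · exact (by omega : -(b / 2) - 1 = -((b + 1) / 2))
      · rfl
      · exact (by omega : (b - a + 1) / 2 = (b - a) / 2 + 1)
      · exact (by omega : -((b + 1) / 2) = -(b / 2) - 1)
      · rfl
      · exact (by omega : (b - a) / 2 + 1 = (b - a + 1) / 2)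
    · refine ⟨1, one_mem _, ?_⟩
      funext j; fin_cases j
      · rfl
      · rfl
      · exact (by omega : (b - a) / 2 + 1 = (b - a + 1) / 2)
      · rfl
      · rfl
      · exact (by omega : (b - a + 1) / 2 = (b - a) / 2 + 1)
  · rcases ht with rfl | rfl | rfl
    · refine ⟨sfl, sfl_mem, ?_⟩
      funext j; fin_cases j
      · rfl
      · exact (by omega : (a - 1) / 2 = a / 2)
      · exact (by omega : (b - a + 1) / 2 = (b - a) / 2 + 1)
      · rfl
      · exact (by omega : a / 2 = (a - 1) / 2)
      · exact (by omega : (b - a) / 2 + 1 = (b - a + 1) / 2)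
    · refine ⟨1, one_mem _, ?_⟩
      funext j; fin_cases j
      · rfl
      · exact (by omega : a / 2 = (a - 1) / 2)
      · rfl
      · rfl
      · exact (by omega : (a - 1) / 2 = a / 2)
      · rfl
    · refine ⟨1, one_mem _, ?_⟩
      funext j; fin_cases j
      · rfl
      · rfl
      · exact (by omega : (b - a) / 2 + 1 = (b - a + 1) / 2)
      · rfl
      · rfl
      · exact (by omega : (b - a + 1) / 2 = (b - a) / 2 + 1)
  · rcases ht with rfl | rfl | rfl
    · refine ⟨1, one_mem _, ?_⟩
      funext j; fin_cases j
      · exact (by omega : -((b + 1) / 2) = -(b / 2) - 1)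
      · rfl
      · rfl
      · exact (by omega : -(b / 2) - 1 = -((b + 1) / 2))
      · rfl
      · rfl
    · refine ⟨1, one_mem _, ?_⟩
      funext j; fin_cases j
      · rfl
      · exact (by omega : a / 2 = (a - 1) / 2)
      · rfl
      · rfl
      · exact (by omega : (a - 1) / 2 = a / 2)
      · rfl
    · refine ⟨sfl, sfl_mem, ?_⟩
      funext j; fin_cases j
      · exact (by omega : -(b / 2) - 1 = -((b + 1) / 2))
      · exact (by omega : (a - 1) / 2 = a / 2)
      · rfl
      · exact (by omega : -((b + 1) / 2) = -(b / 2) - 1)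
      · exact (by omega : a / 2 = (a - 1) / 2)
      · rfl

lemma stepV3 {t : Equiv.Perm (Fin 6)} (ht : t = t1 ∨ t = t2 ∨ t = t3) (a b : ℤ)
    (ha : 0 ≤ a) (hb : 1 ≤ b) (hg : Int.gcd a b = 1) :
    ∃ e, e ∈ Ygrp ∧ permAct t (v3 a b) = permAct e (v3 a b) := by
  have pa : a % 2 = 0 ∨ a % 2 = 1 := by omega
  have pb : b % 2 = 0 ∨ b % 2 = 1 := by omega
  rcases pa with pa | pa <;> rcases pb with pb | pb
  · exact absurd hg (not_coprime_even pa pb)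
  · rcases ht with rfl | rfl | rfl
    · refine ⟨yC, yC_mem, ?_⟩
      funext j; fin_cases j
      · rfl
      · exact (by omega : (a + 1) / 2 = a / 2)
      · rfl
      · rfl
      · exact (by omega : a / 2 = (a + 1) / 2)
      · rfl
    · refine ⟨1, one_mem _, ?_⟩
      funext j; fin_cases j
      · rfl
      · exact (by omega : a / 2 = (a + 1) / 2)
      · rfl
      · rfl
      · exact (by omega : (a + 1) / 2 = a / 2)
      · rfl
    · refine ⟨yB, yB_mem, ?_⟩
      funext j; fin_cases j
      · rfl
      · exact (by omega : (a + 1) / 2 = a / 2)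
      · rfl
      · rfl
      · exact (by omega : a / 2 = (a + 1) / 2)
      · rfl
  · rcases ht with rfl | rfl | rfl
    · refine ⟨1, one_mem _, ?_⟩
      funext j; fin_cases j
      · exact (by omega : -((b + 1) / 2) = -(b / 2))
      · rfl
      · rfl
      · exact (by omega : -(b / 2) = -((b + 1) / 2))
      · rfl
      · rfl
    · refine ⟨yC, yC_mem, ?_⟩
      funext j; fin_cases j
      · exact (by omega : -(b / 2) = -((b + 1) / 2))
      · rfl
      · rfl
      · exact (by omega : -((b + 1) / 2) = -(b / 2))
      · rfl
      · rfl
    · refine ⟨yA, yA_mem, ?_⟩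
      funext j; fin_cases j
      · exact (by omega : -(b / 2) = -((b + 1) / 2))
      · rfl
      · rfl
      · exact (by omega : -((b + 1) / 2) = -(b / 2))
      · rfl
      · rfl
  · rcases ht with rfl | rfl | rfl
    · refine ⟨yA, yA_mem, ?_⟩
      funext j; fin_cases j
      · rfl
      · rfl
      · exact (by omega : (b - a + 1) / 2 = (b - a) / 2)
      · rfl
      · rfl
      · exact (by omega : (b - a) / 2 = (b - a + 1) / 2)
    · refine ⟨yB, yB_mem, ?_⟩
      funext j; fin_cases j
      · rfl
      · rfl
      · exact (by omega : (b - a + 1) / 2 = (b - a) / 2)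
      · rfl
      · rfl
      · exact (by omega : (b - a) / 2 = (b - a + 1) / 2)
    · refine ⟨1, one_mem _, ?_⟩
      funext j; fin_cases j
      · rfl
      · rfl
      · exact (by omega : (b - a) / 2 = (b - a + 1) / 2)
      · rfl
      · rfl
      · exact (by omega : (b - a + 1) / 2 = (b - a) / 2)

lemma stepV4 {t : Equiv.Perm (Fin 6)} (ht : t = t1 ∨ t = t2 ∨ t = t3) (a b : ℤ) :
    permAct t (v4 a b) = v4 a b := by
  rcases ht with rfl | rfl | rfl <;> (funext j; fin_cases j) <;> rfl

lemma conjZ {t ζ : Equiv.Perm (Fin 6)} (ht : t = t1 ∨ t = t2 ∨ t = t3)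
    (hζ : ζ ∈ Zgrp) : ∃ t', (t' = t1 ∨ t' = t2 ∨ t' = t3) ∧ t * ζ = ζ * t' := by
  rcases Zmem hζ with rfl | rfl | rfl <;> rcases ht with rfl | rfl | rfl
  exacts [⟨t1, Or.inl rfl, by decide⟩, ⟨t2, Or.inr (Or.inl rfl), by decide⟩, ⟨t3, Or.inr (Or.inr rfl), by decide⟩, ⟨t3, Or.inr (Or.inr rfl), by decide⟩, ⟨t1, Or.inl rfl, by decide⟩, ⟨t2, Or.inr (Or.inl rfl), by decide⟩, ⟨t2, Or.inr (Or.inl rfl), by decide⟩, ⟨t3, Or.inr (Or.inr rfl), by decide⟩, ⟨t1, Or.inl rfl, by decide⟩]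


lemma gen_inv {t : Equiv.Perm (Fin 6)} (ht : t = t1 ∨ t = t2 ∨ t = t3) {y : Fin 6 → ℤ}
    (hy : y ∈ Rset) : permAct t y ∈ Rset := by
  simp only [Rset, Set.mem_setOf_eq] at hy
  rcases hy with ⟨σ, hσ, a, b, ha, hb, hg, rfl⟩ | ⟨σ, hσ, a, b, ha, hb, hg, rfl⟩ |
    ⟨σ, hσ, a, b, ha, hb, hg, rfl⟩ | ⟨σ, hσ, a, b, ha, hb, hg, rfl⟩
  · rcases Set.mem_mul.1 hσ with ⟨ζ, hζ, x, hx, rfl⟩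
    obtain ⟨t', ht', hconj⟩ := conjZ ht hζ
    obtain ⟨e, he, hid⟩ := stepV1 ht' a b ha hb hg
    have key : permAct t (permAct (ζ * x) (v1 a b)) = permAct (ζ * (x * e)) (v1 a b) := by
      calc permAct t (permAct (ζ * x) (v1 a b))
          = permAct (t * (ζ * x)) (v1 a b) := (permAct_mul _ _ _).symm
        _ = permAct ((t * ζ) * x) (v1 a b) := by rw [mul_assoc]
        _ = permAct ((ζ * t') * x) (v1 a b) := by rw [hconj]
        _ = permAct (ζ * (t' * x)) (v1 a b) := by rw [mul_assoc]
        _ = permAct (ζ * (x * t')) (v1 a b) := by rw [commX ht' hx]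
        _ = permAct ((ζ * x) * t') (v1 a b) := by rw [mul_assoc]
        _ = permAct (ζ * x) (permAct t' (v1 a b)) := permAct_mul _ _ _
        _ = permAct (ζ * x) (permAct e (v1 a b)) := by rw [hid]
        _ = permAct ((ζ * x) * e) (v1 a b) := (permAct_mul _ _ _).symm
        _ = permAct (ζ * (x * e)) (v1 a b) := by rw [mul_assoc]
    rw [key]
    exact memV1 hζ (mul_mem hx he) ha hb hg
  · rcases Set.mem_mul.1 hσ with ⟨ζ, hζ, x, hx, rfl⟩
    obtain ⟨t', ht', hconj⟩ := conjZ ht hζ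
    obtain ⟨e, he, hid⟩ := stepU2 ht' a b ha hb hg
    have key : permAct t (permAct (ζ * x) (u2 a b)) = permAct (ζ * (x * e)) (u2 a b) := by
      calc permAct t (permAct (ζ * x) (u2 a b))
          = permAct (t * (ζ * x)) (u2 a b) := (permAct_mul _ _ _).symm
        _ = permAct ((t * ζ) * x) (u2 a b) := by rw [mul_assoc]
        _ = permAct ((ζ * t') * x) (u2 a b) := by rw [hconj]
        _ = permAct (ζ * (t' * x)) (u2 a b) := by rw [mul_assoc]
        _ = permAct (ζ * (x * t')) (u2 a b) := by rw [commX ht' hx]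
        _ = permAct ((ζ * x) * t') (u2 a b) := by rw [mul_assoc]
        _ = permAct (ζ * x) (permAct t' (u2 a b)) := permAct_mul _ _ _
        _ = permAct (ζ * x) (permAct e (u2 a b)) := by rw [hid]
        _ = permAct ((ζ * x) * e) (u2 a b) := (permAct_mul _ _ _).symm
        _ = permAct (ζ * (x * e)) (u2 a b) := by rw [mul_assoc]
    rw [key]
    exact memU2 hζ (mul_mem hx he) ha hb hg
  · rcases Set.mem_mul.1 hσ with ⟨ζ, hζ, x, hx, rfl⟩
    obtain ⟨t', ht', hconj⟩ := conjZ ht hζ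
    obtain ⟨e, he, hid⟩ := stepV3 ht' a b ha hb hg
    have key : permAct t (permAct (ζ * x) (v3 a b)) = permAct (ζ * (x * e)) (v3 a b) := by
      calc permAct t (permAct (ζ * x) (v3 a b))
          = permAct (t * (ζ * x)) (v3 a b) := (permAct_mul _ _ _).symm
        _ = permAct ((t * ζ) * x) (v3 a b) := by rw [mul_assoc]
        _ = permAct ((ζ * t') * x) (v3 a b) := by rw [hconj]
        _ = permAct (ζ * (t' * x)) (v3 a b) := by rw [mul_assoc]
        _ = permAct (ζ * (x * t')) (v3 a b) := by rw [commY ht' hx]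
        _ = permAct ((ζ * x) * t') (v3 a b) := by rw [mul_assoc]
        _ = permAct (ζ * x) (permAct t' (v3 a b)) := permAct_mul _ _ _
        _ = permAct (ζ * x) (permAct e (v3 a b)) := by rw [hid]
        _ = permAct ((ζ * x) * e) (v3 a b) := (permAct_mul _ _ _).symm
        _ = permAct (ζ * (x * e)) (v3 a b) := by rw [mul_assoc]
    rw [key]
    exact memV3 hζ (mul_mem hx he) ha hb hg
  · obtain ⟨t', ht', hconj⟩ := conjZ ht hσ
    have key : permAct t (permAct σ (v4 a b)) = permAct σ (v4 a b) := by
      calc permAct t (permAct σ (v4 a b))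
          = permAct (t * σ) (v4 a b) := (permAct_mul _ _ _).symm
        _ = permAct (σ * t') (v4 a b) := by rw [hconj]
        _ = permAct σ (permAct t' (v4 a b)) := permAct_mul _ _ _
        _ = permAct σ (v4 a b) := by rw [stepV4 ht']
    rw [key]
    exact memV4 hσ ha hb hg

lemma zgen_inv {y : Fin 6 → ℤ} (hy : y ∈ Rset) : permAct zgen y ∈ Rset := by
  simp only [Rset, Set.mem_setOf_eq] at hy
  rcases hy with ⟨σ, hσ, a, b, ha, hb, hg, rfl⟩ | ⟨σ, hσ, a, b, ha, hb, hg, rfl⟩ |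
    ⟨σ, hσ, a, b, ha, hb, hg, rfl⟩ | ⟨σ, hσ, a, b, ha, hb, hg, rfl⟩
  · rcases Set.mem_mul.1 hσ with ⟨ζ, hζ, x, hx, rfl⟩
    rw [← permAct_mul, ← mul_assoc]
    exact memV1 (mul_mem zgen_mem hζ) hx ha hb hg
  · rcases Set.mem_mul.1 hσ with ⟨ζ, hζ, x, hx, rfl⟩
    rw [← permAct_mul, ← mul_assoc]
    exact memU2 (mul_mem zgen_mem hζ) hx ha hb hg
  · rcases Set.mem_mul.1 hσ with ⟨ζ, hζ, x, hx, rfl⟩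
    rw [← permAct_mul, ← mul_assoc]
    exact memV3 (mul_mem zgen_mem hζ) hx ha hb hg
  · rw [← permAct_mul]
    exact memV4 (mul_mem zgen_mem hσ) ha hb hg

lemma stab {σ : Equiv.Perm (Fin 6)} (hσ : σ ∈ Wgrp) {y : Fin 6 → ℤ} (hy : y ∈ Rset) :
    permAct σ y ∈ Rset := by
  have H : ∀ g ∈ Wgrp,
      (∀ y ∈ Rset, permAct g y ∈ Rset) ∧ (∀ y ∈ Rset, permAct g⁻¹ y ∈ Rset) := by
    intro g hg
    refine Subgroup.closure_induction ?_ ?_ ?_ ?_ hg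
    · intro x hx
      simp only [Set.mem_insert_iff, Set.mem_singleton_iff] at hx
      rcases hx with rfl | rfl | rfl | rfl
      · exact ⟨fun y hy => gen_inv (Or.inl rfl) hy, fun y hy => by
          rw [show (Equiv.swap 0 3 : Equiv.Perm (Fin 6))⁻¹ = Equiv.swap 0 3 by decide]
          exact gen_inv (Or.inl rfl) hy⟩
      · exact ⟨fun y hy => gen_inv (Or.inr (Or.inl rfl)) hy, fun y hy => by
          rw [show (Equiv.swap 1 4 : Equiv.Perm (Fin 6))⁻¹ = Equiv.swap 1 4 by decide]
          exact gen_inv (Or.inr (Or.inl rfl)) hy⟩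
      · exact ⟨fun y hy => gen_inv (Or.inr (Or.inr rfl)) hy, fun y hy => by
          rw [show (Equiv.swap 2 5 : Equiv.Perm (Fin 6))⁻¹ = Equiv.swap 2 5 by decide]
          exact gen_inv (Or.inr (Or.inr rfl)) hy⟩
      · exact ⟨fun y hy => zgen_inv hy, fun y hy => by
          rw [show zgen⁻¹ = zgen * zgen by decide, permAct_mul]
          exact zgen_inv (zgen_inv hy)⟩
    · exact ⟨fun y hy => by rw [permAct_one]; exact hy,
        fun y hy => by rw [inv_one, permAct_one]; exact hy⟩
    · intro u v _ _ ihu ihv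
      exact ⟨fun y hy => by rw [permAct_mul]; exact ihu.1 _ (ihv.1 _ hy),
        fun y hy => by rw [mul_inv_rev, permAct_mul]; exact ihv.2 _ (ihu.2 _ hy)⟩
    · intro u _ ihu
      exact ⟨ihu.2, fun y hy => by rw [inv_inv]; exact ihu.1 _ hy⟩
  exact (H σ hσ).1 y hy

lemma baseV1 {a b : ℤ} (ha : 0 ≤ a) (hb : 1 ≤ b) (hg : Int.gcd a b = 1) :
    v1 a b ∈ Rset := by
  have h := memV1 (one_mem _) (one_mem _) ha hb hg
  rwa [mul_one, permAct_one] at h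

lemma baseV2 {a b : ℤ} (ha : 0 ≤ a) (hb : 1 ≤ b) (hg : Int.gcd a b = 1) :
    v2 a b ∈ Rset := by
  have h := memU2 (a := b) (b := a) (one_mem _) (one_mem _) hb ha
    (by rw [Int.gcd_comm]; exact hg)
  rwa [mul_one, permAct_one] at h

lemma baseV3 {a b : ℤ} (ha : 0 ≤ a) (hb : 1 ≤ b) (hg : Int.gcd a b = 1) :
    v3 a b ∈ Rset := by
  have h := memV3 (one_mem _) (one_mem _) ha hb hg
  rwa [mul_one, permAct_one] at h

lemma baseV4 {a b : ℤ} (ha : 0 ≤ a) (hb : 1 ≤ b) (hg : Int.gcd a b = 1) :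
    v4 a b ∈ Rset := by
  have h := memV4 (one_mem _) ha hb hg
  rwa [permAct_one] at h


/-- the orbit of the vectors `v1, v2, v3, v4` (over `a ≥ 0`, `b ≥ 1`,
`gcd(a,b) = 1`) under the group `W` equals the union of: the `Z·X`-images of `v1(a,b)`
(`a ≥ 0`, `b ≥ 1`, coprime), the `Z·X`-images of `u2(a,b)` (`a ≥ 1`, `b ≥ 0`, coprime),
the `Z·Y`-images of `v3(a,b)` (`a ≥ 0`, `b ≥ 1`, coprime), and the `Z`-images of
`v4(a,b)` (`a ≥ 0`, `b ≥ 1`, coprime). -/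
theorem stmt_15 :
    {y : Fin 6 → ℤ | ∃ σ ∈ Wgrp, ∃ a b : ℤ, 0 ≤ a ∧ 1 ≤ b ∧ Int.gcd a b = 1 ∧
        (y = permAct σ (v1 a b) ∨ y = permAct σ (v2 a b) ∨
         y = permAct σ (v3 a b) ∨ y = permAct σ (v4 a b))} =
    {y : Fin 6 → ℤ |
        (∃ σ ∈ (Zgrp : Set (Equiv.Perm (Fin 6))) * (Xgrp : Set (Equiv.Perm (Fin 6))),
            ∃ a b : ℤ, 0 ≤ a ∧ 1 ≤ b ∧ Int.gcd a b = 1 ∧ y = permAct σ (v1 a b)) ∨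
        (∃ σ ∈ (Zgrp : Set (Equiv.Perm (Fin 6))) * (Xgrp : Set (Equiv.Perm (Fin 6))),
            ∃ a b : ℤ, 1 ≤ a ∧ 0 ≤ b ∧ Int.gcd a b = 1 ∧ y = permAct σ (u2 a b)) ∨
        (∃ σ ∈ (Zgrp : Set (Equiv.Perm (Fin 6))) * (Ygrp : Set (Equiv.Perm (Fin 6))),
            ∃ a b : ℤ, 0 ≤ a ∧ 1 ≤ b ∧ Int.gcd a b = 1 ∧ y = permAct σ (v3 a b)) ∨
        (∃ σ ∈ Zgrp, ∃ a b : ℤ, 0 ≤ a ∧ 1 ≤ b ∧ Int.gcd a b = 1 ∧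
            y = permAct σ (v4 a b))} := by
  ext y
  simp only [Set.mem_setOf_eq]
  constructor
  · rintro ⟨σ, hσ, a, b, ha, hb, hg, hc⟩
    rcases hc with rfl | rfl | rfl | rfl
    · exact stab hσ (baseV1 ha hb hg)
    · exact stab hσ (baseV2 ha hb hg)
    · exact stab hσ (baseV3 ha hb hg)
    · exact stab hσ (baseV4 ha hb hg)
  · rintro (⟨σ, hσ, a, b, ha, hb, hg, rfl⟩ | ⟨σ, hσ, a, b, ha, hb, hg, rfl⟩ |
      ⟨σ, hσ, a, b, ha, hb, hg, rfl⟩ | ⟨σ, hσ, a, b, ha, hb, hg, rfl⟩)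
    · rcases Set.mem_mul.1 hσ with ⟨ζ, hζ, x, hx, rfl⟩
      exact ⟨ζ * x, mul_mem (ZleW hζ) (XleW hx), a, b, ha, hb, hg, Or.inl rfl⟩
    · rcases Set.mem_mul.1 hσ with ⟨ζ, hζ, x, hx, rfl⟩
      exact ⟨ζ * x, mul_mem (ZleW hζ) (XleW hx), b, a, hb, ha,
        by rw [Int.gcd_comm]; exact hg, Or.inr (Or.inl rfl)⟩
    · rcases Set.mem_mul.1 hσ with ⟨ζ, hζ, x, hx, rfl⟩
      exact ⟨ζ * x, mul_mem (ZleW hζ) (YleW hx), a, b, ha, hb, hg,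
        Or.inr (Or.inr (Or.inl rfl))⟩
    · exact ⟨σ, ZleW hσ, a, b, ha, hb, hg, Or.inr (Or.inr (Or.inr rfl))⟩
end
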